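/- (Second-order deviation of the one-shot quantities from the free energy) Let r and g be probability vectors on Fin d with g strictly positive, and let ε ∈ (0,1). Then there exists a constant C > 0 such that for every n ≥ 1, |D_H^ε(r^{⊗n} ‖ g^{⊗n}) − n · D(r ‖ g)| ≤ C · √n. -/

import Mathlib

open Finset Real Filter

/-- A probability vector on a finite index set. -/
def IsProbVec {ι : Type*} [Fintype ι] (r : ι → ℝ) : Prop :=
  (∀ i, 0 ≤ r i) ∧ ∑ i, r i = 1

/-- A column-stochastic matrix: nonnegative entries, each column sums to 1. -/
def ColStochastic {ι κ : Type*} [Fintype ι] [Fintype κ] (M : Matrix κ ι ℝ) : Prop :=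
  (∀ i j, 0 ≤ M i j) ∧ ∀ j, ∑ i, M i j = 1

/-- Tensor product of vectors. -/
def tens {ι κ : Type*} (r : ι → ℝ) (s : κ → ℝ) : ι × κ → ℝ := fun p => r p.1 * s p.2

/-- n-fold tensor power of a vector on `Fin d`. -/
def tensPow {d : ℕ} (r : Fin d → ℝ) (n : ℕ) : (Fin n → Fin d) → ℝ :=
  fun f => ∏ k, r (f k)

/-- Relative entropy `D(r ‖ g)` (natural logarithm; `0 * log 0 = 0` holds by convention). -/
noncomputable def relEnt {ι : Type*} [Fintype ι] (r g : ι → ℝ) : ℝ :=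
  ∑ i, r i * (Real.log (r i) - Real.log (g i))

/-- Optimal type-II error in hypothesis testing between `r` and `g`. -/
noncomputable def bEps {ι : Type*} [Fintype ι] (ε : ℝ) (r g : ι → ℝ) : ℝ :=
  sInf {y | ∃ Q : ι → ℝ, (∀ i, 0 ≤ Q i ∧ Q i ≤ 1) ∧ 1 - ε ≤ ∑ i, Q i * r i ∧
    y = ∑ i, Q i * g i}

/-- Hypothesis-testing relative entropy. -/
noncomputable def DH {ι : Type*} [Fintype ι] (ε : ℝ) (r g : ι → ℝ) : ℝ :=
  - Real.log (bEps ε r g)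

/-- Partial sums of `v` along the ordering `e`. -/
noncomputable def cumul {ι : Type*} [Fintype ι] (v : ι → ℝ)
    (e : Fin (Fintype.card ι) ≃ ι) (m : ℕ) : ℝ :=
  ∑ α ∈ Finset.univ.filter (fun α : Fin (Fintype.card ι) => (α : ℕ) < m), v (e α)

/-- `L` is the rescaled Lorenz curve of `r` relative to `g`: indices are ordered so that the
ratios `r/g` are nonincreasing, and `L` linearly interpolates the cumulative points. -/
def IsLorenzCurveOf {ι : Type*} [Fintype ι] (r g : ι → ℝ) (L : ℝ → ℝ) : Prop :=
  ∃ e : Fin (Fintype.card ι) ≃ ι,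
    (∀ a b : Fin (Fintype.card ι), a ≤ b → r (e b) / g (e b) ≤ r (e a) / g (e a)) ∧
    ∀ m : Fin (Fintype.card ι), ∀ x : ℝ,
      cumul g e (m : ℕ) ≤ x → x ≤ cumul g e ((m : ℕ) + 1) →
      L x = cumul r e (m : ℕ) + (x - cumul g e (m : ℕ)) * (r (e m) / g (e m))

/-- Gibbs state of a two-level battery with gap `W` at inverse temperature `β`. -/
noncomputable def gibbsBit (β W : ℝ) : Fin 2 → ℝ :=
  fun k => (1 / (1 + Real.exp (-β * W))) * (if k = 0 then 1 else Real.exp (-β * W))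

/-- Battery ground state `(1,0)`. -/
def groundBit : Fin 2 → ℝ := fun k => if k = 0 then 1 else 0

/-- Battery excited state `(0,1)`. -/
def excitedBit : Fin 2 → ℝ := fun k => if k = 0 then 0 else 1

/-- `W` units of work are ε-extractable from `r` relative to the equilibrium state `g`. -/
def ExtractableWork {ι : Type*} [Fintype ι] (β : ℝ) (g r : ι → ℝ) (ε W : ℝ) : Prop :=
  0 ≤ W ∧ ∃ M : Matrix (ι × Fin 2) (ι × Fin 2) ℝ, ColStochastic M ∧
    M.mulVec (tens g (gibbsBit β W)) = tens g (gibbsBit β W) ∧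
    (1/2) * ∑ k, |(∑ i, M.mulVec (tens r groundBit) (i, k)) - excitedBit k| ≤ ε

/-- One-shot ε-work yield. -/
noncomputable def Wgain {ι : Type*} [Fintype ι] (β : ℝ) (g r : ι → ℝ) (ε : ℝ) : ℝ :=
  sSup {W | ExtractableWork β g r ε W}

/-- `W` units of work ε-suffice to create `r` relative to the equilibrium state `g`. -/
def FormationWork {ι : Type*} [Fintype ι] (β : ℝ) (g r : ι → ℝ) (ε W : ℝ) : Prop :=
  0 ≤ W ∧ ∃ M : Matrix (ι × Fin 2) (ι × Fin 2) ℝ, ∃ rt : ι → ℝ, ColStochastic M ∧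
    M.mulVec (tens g (gibbsBit β W)) = tens g (gibbsBit β W) ∧
    IsProbVec rt ∧ (1/2) * ∑ i, |rt i - r i| ≤ ε ∧
    M.mulVec (tens g excitedBit) = tens rt groundBit

/-- One-shot ε-work cost. -/
noncomputable def Wcost {ι : Type*} [Fintype ι] (β : ℝ) (g r : ι → ℝ) (ε : ℝ) : ℝ :=
  sInf {W | FormationWork β g r ε W}

noncomputable def SnX {d : ℕ} (X : Fin d → ℝ) (n : ℕ) (f : Fin n → Fin d) : ℝ := ∑ k, X (f k)

lemma sum_pi_succ {d n : ℕ} (F : (Fin (n+1) → Fin d) → ℝ) :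
    ∑ f, F f = ∑ i : Fin d, ∑ f : Fin n → Fin d, F (Fin.cons i f) := by
  rw [← (Fin.consEquiv (fun _ => Fin d)).sum_comp F, Fintype.sum_prod_type]
  rfl

lemma tensPow_cons {d : ℕ} (r : Fin d → ℝ) (n : ℕ) (i : Fin d) (f : Fin n → Fin d) :
    tensPow r (n+1) (Fin.cons i f) = r i * tensPow r n f := by
  unfold tensPow; rw [Fin.prod_univ_succ]; simp

lemma SnX_cons {d : ℕ} (X : Fin d → ℝ) (n : ℕ) (i : Fin d) (f : Fin n → Fin d) :
    SnX X (n+1) (Fin.cons i f) = X i + SnX X n f := by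
  unfold SnX; rw [Fin.sum_univ_succ]; simp

lemma tensPow_nonneg {d : ℕ} {r : Fin d → ℝ} (hr : ∀ i, 0 ≤ r i) (n : ℕ) (f : Fin n → Fin d) :
    0 ≤ tensPow r n f := Finset.prod_nonneg fun k _ => hr (f k)

lemma tens_moments {d : ℕ} (r : Fin d → ℝ) (hr1 : ∑ i, r i = 1)
    (Y : Fin d → ℝ) (hY : ∑ i, r i * Y i = 0) (n : ℕ) :
    (∑ f : Fin n → Fin d, tensPow r n f) = 1 ∧
    (∑ f : Fin n → Fin d, tensPow r n f * SnX Y n f) = 0 ∧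
    (∑ f : Fin n → Fin d, tensPow r n f * (SnX Y n f)^2) = n * ∑ i, r i * (Y i)^2 := by
  induction n with
  | zero => simp [tensPow, SnX]
  | succ n ih =>
    obtain ⟨h1, h2, h3⟩ := ih
    refine ⟨?_, ?_, ?_⟩
    · rw [sum_pi_succ]
      simp_rw [tensPow_cons, ← Finset.mul_sum, h1, mul_one, hr1]
    · rw [sum_pi_succ]
      have key : ∀ i : Fin d, ∑ f : Fin n → Fin d,
          tensPow r (n+1) (Fin.cons i f) * SnX Y (n+1) (Fin.cons i f)
          = r i * Y i := by
        intro i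
        simp_rw [tensPow_cons, SnX_cons]
        have : ∀ f : Fin n → Fin d, r i * tensPow r n f * (Y i + SnX Y n f)
            = (r i * Y i) * tensPow r n f + r i * (tensPow r n f * SnX Y n f) := by
          intro f; ring
        simp_rw [this, Finset.sum_add_distrib, ← Finset.mul_sum, h1, h2, mul_one, mul_zero,
          add_zero]
      simp_rw [key, hY]
    · rw [sum_pi_succ]
      have key : ∀ i : Fin d, ∑ f : Fin n → Fin d,
          tensPow r (n+1) (Fin.cons i f) * (SnX Y (n+1) (Fin.cons i f))^2
          = r i * (Y i)^2 + (2 * (Y i)) * (r i * 0) + r i * (n * ∑ j, r j * (Y j)^2) := by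
        intro i
        simp_rw [tensPow_cons, SnX_cons]
        have : ∀ f : Fin n → Fin d, r i * tensPow r n f * (Y i + SnX Y n f)^2
            = (r i * (Y i)^2) * tensPow r n f + (2 * Y i) * (r i * (tensPow r n f * SnX Y n f))
              + r i * (tensPow r n f * (SnX Y n f)^2) := by
          intro f; ring
        simp_rw [this, Finset.sum_add_distrib, ← Finset.mul_sum, h1, h2, h3, mul_one]
      simp_rw [key, mul_zero, add_zero, Finset.sum_add_distrib, ← Finset.sum_mul, hr1]
      push_cast
      ring

lemma cheb {d : ℕ} (r : Fin d → ℝ) (hr0 : ∀ i, 0 ≤ r i) (hr1 : ∑ i, r i = 1)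
    (Y : Fin d → ℝ) (hY : ∑ i, r i * Y i = 0) (n : ℕ) (t : ℝ) (ht : 0 < t)
    (F : Finset (Fin n → Fin d)) (hF : ∀ f ∈ F, t ≤ |SnX Y n f|) :
    ∑ f ∈ F, tensPow r n f ≤ (n * ∑ i, r i * (Y i)^2) / t^2 := by
  have h3 := (tens_moments r hr1 Y hY n).2.2
  have ht2 : (0:ℝ) < t^2 := by positivity
  calc ∑ f ∈ F, tensPow r n f
      ≤ ∑ f ∈ F, tensPow r n f * (SnX Y n f)^2 / t^2 := by
        apply Finset.sum_le_sum
        intro f hf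
        have h1 : t^2 ≤ (SnX Y n f)^2 := by
          have h := hF f hf
          have := sq_abs (SnX Y n f)
          nlinarith [abs_nonneg (SnX Y n f)]
        have hp := tensPow_nonneg hr0 n f
        rw [le_div_iff₀ ht2]
        nlinarith
    _ ≤ ∑ f : Fin n → Fin d, tensPow r n f * (SnX Y n f)^2 / t^2 := by
        apply Finset.sum_le_sum_of_subset_of_nonneg (Finset.subset_univ F)
        intro f _ _
        have hp := tensPow_nonneg hr0 n f
        positivity
    _ = (n * ∑ i, r i * (Y i)^2) / t^2 := by rw [← Finset.sum_div, h3]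

lemma tensPow_g_eq {d : ℕ} {r g : Fin d → ℝ} (hr0 : ∀ i, 0 ≤ r i) (hgpos : ∀ i, 0 < g i)
    (n : ℕ) (f : Fin n → Fin d) (hf : 0 < tensPow r n f) :
    tensPow g n f =
      Real.exp (-(SnX (fun i => Real.log (r i) - Real.log (g i)) n f)) * tensPow r n f := by
  have hrk : ∀ k, 0 < r (f k) := by
    intro k
    rcases (hr0 (f k)).lt_or_eq with h | h
    · exact h
    · exfalso
      have : tensPow r n f = 0 :=
        Finset.prod_eq_zero (Finset.mem_univ k) h.symm
      rw [this] at hf; exact lt_irrefl 0 hf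
  have hr' : tensPow r n f = Real.exp (∑ k, Real.log (r (f k))) := by
    rw [Real.exp_sum]
    exact Finset.prod_congr rfl fun k _ => (Real.exp_log (hrk k)).symm
  have hg' : tensPow g n f = Real.exp (∑ k, Real.log (g (f k))) := by
    rw [Real.exp_sum]
    exact Finset.prod_congr rfl fun k _ => (Real.exp_log (hgpos (f k))).symm
  rw [hr', hg', ← Real.exp_add]
  congr 1
  unfold SnX
  rw [Finset.sum_sub_distrib]
  ring

lemma SnX_sub {d : ℕ} (X : Fin d → ℝ) (D : ℝ) (n : ℕ) (f : Fin n → Fin d) :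
    SnX (fun i => X i - D) n f = SnX X n f - n * D := by
  unfold SnX
  rw [Finset.sum_sub_distrib, Finset.sum_const, Finset.card_univ, Fintype.card_fin,
    nsmul_eq_mul]

/-- second-order (√n) deviation of the one-shot hypothesis-testing entropy
from its asymptotic free-energy value. -/
theorem DH_second_order {d : ℕ} (r g : Fin d → ℝ)
    (hr : IsProbVec r) (hg : IsProbVec g) (hgpos : ∀ i, 0 < g i)
    (ε : ℝ) (hε : ε ∈ Set.Ioo (0 : ℝ) 1) :
    ∃ C > 0, ∀ n : ℕ, 1 ≤ n →
      |DH ε (tensPow r n) (tensPow g n) - n * relEnt r g| ≤ C * Real.sqrt n := by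
  classical
  obtain ⟨hr0, hr1⟩ := hr
  obtain ⟨hg0, hg1⟩ := hg
  obtain ⟨hε1, hε2⟩ := hε
  set X : Fin d → ℝ := fun i => Real.log (r i) - Real.log (g i) with hXdef
  set D : ℝ := relEnt r g with hDdef
  have hD : D = ∑ i, r i * X i := rfl
  set Y : Fin d → ℝ := fun i => X i - D with hYdef
  have hY : ∑ i, r i * Y i = 0 := by
    simp only [hYdef, mul_sub]
    rw [Finset.sum_sub_distrib, ← Finset.sum_mul, hr1, one_mul, ← hD]
    exact sub_self D
  set V : ℝ := ∑ i, r i * (Y i)^2 with hVdef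
  have hV0 : 0 ≤ V := Finset.sum_nonneg fun i _ => mul_nonneg (hr0 i) (sq_nonneg _)
  have h1ε : 0 < 1 - ε := by linarith
  set ce : ℝ := Real.sqrt ((V+1)/ε) with hcedef
  have hce2 : ce^2 = (V+1)/ε := Real.sq_sqrt (by positivity)
  have hce : 0 < ce := Real.sqrt_pos.mpr (by positivity)
  set cc : ℝ := Real.sqrt (2*(V+1)/(1-ε)) with hccdef
  have hcc2 : cc^2 = 2*(V+1)/(1-ε) := Real.sq_sqrt (by positivity)
  have hcc : 0 < cc := Real.sqrt_pos.mpr (by positivity)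
  set K : ℝ := Real.log (2/(1-ε)) with hKdef
  have hK : 0 < K := Real.log_pos (by rw [lt_div_iff₀ h1ε]; linarith)
  refine ⟨ce + cc + K, by positivity, ?_⟩
  intro n hn
  set sn : ℝ := Real.sqrt n with hsndef
  have hsn2 : sn^2 = n := Real.sq_sqrt (Nat.cast_nonneg n)
  have hsn1 : 1 ≤ sn := by
    rw [show (1:ℝ) = Real.sqrt 1 from Real.sqrt_one.symm]
    exact Real.sqrt_le_sqrt (by exact_mod_cast hn)
  have hsn : 0 < sn := lt_of_lt_of_le one_pos hsn1
  have hn1 : (1:ℝ) ≤ (n:ℝ) := by exact_mod_cast hn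
  have hnpos : (0:ℝ) < (n:ℝ) := by linarith
  have hsum1 : ∑ f : Fin n → Fin d, tensPow r n f = 1 := (tens_moments r hr1 Y hY n).1
  -- Chebyshev, lower tail
  have chebLow : ∑ f ∈ Finset.univ.filter (fun f : Fin n → Fin d => SnX X n f < n*D - ce*sn),
      tensPow r n f ≤ ε := by
    have hb := cheb r hr0 hr1 Y hY n (ce*sn) (by positivity)
      (Finset.univ.filter (fun f : Fin n → Fin d => SnX X n f < n*D - ce*sn))
      (by
        intro f hf
        rw [Finset.mem_filter] at hf
        have h2 := hf.2
        rw [hYdef, SnX_sub]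
        have h3 : ce*sn ≤ -(SnX X n f - n*D) := by linarith
        exact h3.trans (neg_le_abs _))
    rw [← hVdef] at hb
    refine hb.trans ?_
    rw [mul_pow, hce2, hsn2, div_le_iff₀ (by positivity)]
    have heq : ε * ((V+1)/ε * (n:ℝ)) = (V+1) * n := by field_simp
    rw [heq]
    have h := mul_le_mul_of_nonneg_left (show V ≤ V+1 by linarith) (le_of_lt hnpos)
    exact h.trans_eq (mul_comm _ _)
  -- Chebyshev, upper tail
  have chebHigh : ∑ f ∈ Finset.univ.filter (fun f : Fin n → Fin d => n*D + cc*sn < SnX X n f),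
      tensPow r n f ≤ (1-ε)/2 := by
    have hb := cheb r hr0 hr1 Y hY n (cc*sn) (by positivity)
      (Finset.univ.filter (fun f : Fin n → Fin d => n*D + cc*sn < SnX X n f))
      (by
        intro f hf
        rw [Finset.mem_filter] at hf
        have h2 := hf.2
        rw [hYdef, SnX_sub]
        have h3 : cc*sn ≤ SnX X n f - n*D := by linarith
        exact h3.trans (le_abs_self _))
    rw [← hVdef] at hb
    refine hb.trans ?_
    rw [mul_pow, hcc2, hsn2, div_le_iff₀ (by positivity)]
    have heq : (1-ε)/2 * (2*(V+1)/(1-ε) * (n:ℝ)) = (V+1) * n := by field_simp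
    rw [heq]
    have h := mul_le_mul_of_nonneg_left (show V ≤ V+1 by linarith) (le_of_lt hnpos)
    exact h.trans_eq (mul_comm _ _)
  -- the feasible set
  have hbEps : bEps ε (tensPow r n) (tensPow g n) =
      sInf {y | ∃ Q : (Fin n → Fin d) → ℝ, (∀ f, 0 ≤ Q f ∧ Q f ≤ 1) ∧
        1 - ε ≤ ∑ f, Q f * tensPow r n f ∧ y = ∑ f, Q f * tensPow g n f} := rfl
  set S : Set ℝ := {y | ∃ Q : (Fin n → Fin d) → ℝ, (∀ f, 0 ≤ Q f ∧ Q f ≤ 1) ∧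
      1 - ε ≤ ∑ f, Q f * tensPow r n f ∧ y = ∑ f, Q f * tensPow g n f} with hSdef
  have hSne : S.Nonempty := by
    refine ⟨∑ f, (1:ℝ) * tensPow g n f, fun _ => 1, fun f => ⟨zero_le_one, le_refl 1⟩, ?_, rfl⟩
    simp only [one_mul]
    rw [hsum1]
    linarith
  have hSbdd : BddBelow S := by
    refine ⟨0, ?_⟩
    rintro y ⟨Q, hQ, -, rfl⟩
    exact Finset.sum_nonneg fun f _ => mul_nonneg (hQ f).1 (tensPow_nonneg hg0 n f)
  -- achievability
  have hach : bEps ε (tensPow r n) (tensPow g n) ≤ Real.exp (-(n*D - ce*sn)) := by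
    set A : Finset (Fin n → Fin d) :=
      Finset.univ.filter (fun f => n*D - ce*sn ≤ SnX X n f ∧ 0 < tensPow r n f) with hAdef
    set Q : (Fin n → Fin d) → ℝ := fun f => if f ∈ A then 1 else 0 with hQdef
    have hQ01 : ∀ f, 0 ≤ Q f ∧ Q f ≤ 1 := by
      intro f
      by_cases h : f ∈ A <;> simp [hQdef, h]
    have hQr : ∑ f, Q f * tensPow r n f = ∑ f ∈ A, tensPow r n f := by
      simp only [hQdef, ite_mul, one_mul, zero_mul]
      rw [Finset.sum_ite_mem, Finset.univ_inter]
    have hQg : ∑ f, Q f * tensPow g n f = ∑ f ∈ A, tensPow g n f := by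
      simp only [hQdef, ite_mul, one_mul, zero_mul]
      rw [Finset.sum_ite_mem, Finset.univ_inter]
    have hA' : ∑ f ∈ Finset.univ.filter (fun f : Fin n → Fin d => n*D - ce*sn ≤ SnX X n f),
        tensPow r n f = ∑ f ∈ A, tensPow r n f := by
      rw [← Finset.sum_filter_add_sum_filter_not
        (Finset.univ.filter (fun f : Fin n → Fin d => n*D - ce*sn ≤ SnX X n f))
        (fun f => 0 < tensPow r n f)]
      have hz : ∑ f ∈ (Finset.univ.filter
          (fun f : Fin n → Fin d => n*D - ce*sn ≤ SnX X n f)).filter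
          (fun f => ¬ 0 < tensPow r n f), tensPow r n f = 0 := by
        apply Finset.sum_eq_zero
        intro f hf
        have h2 := (Finset.mem_filter.mp hf).2
        exact le_antisymm (not_lt.mp h2) (tensPow_nonneg hr0 n f)
      rw [hz, add_zero, Finset.filter_filter]
    have hArsum : 1 - ε ≤ ∑ f ∈ A, tensPow r n f := by
      have htot := Finset.sum_filter_add_sum_filter_not Finset.univ
        (fun f : Fin n → Fin d => n*D - ce*sn ≤ SnX X n f) (tensPow r n)
      rw [hsum1] at htot
      have hnotP : Finset.univ.filter (fun f : Fin n → Fin d => ¬ (n*D - ce*sn ≤ SnX X n f))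
          = Finset.univ.filter (fun f : Fin n → Fin d => SnX X n f < n*D - ce*sn) := by
        apply Finset.filter_congr
        intro f _
        exact not_le
      rw [hnotP] at htot
      linarith [chebLow, hA' ▸ htot]
    have hgA : ∑ f ∈ A, tensPow g n f ≤ Real.exp (-(n*D - ce*sn)) := by
      have step1 : ∀ f ∈ A, tensPow g n f ≤ Real.exp (-(n*D - ce*sn)) * tensPow r n f := by
        intro f hf
        obtain ⟨-, hP, hpos⟩ := Finset.mem_filter.mp hf
        rw [tensPow_g_eq hr0 hgpos n f hpos]
        apply mul_le_mul_of_nonneg_right _ (le_of_lt hpos)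
        exact Real.exp_le_exp.mpr (by linarith)
      calc ∑ f ∈ A, tensPow g n f
          ≤ ∑ f ∈ A, Real.exp (-(n*D - ce*sn)) * tensPow r n f := Finset.sum_le_sum step1
        _ = Real.exp (-(n*D - ce*sn)) * ∑ f ∈ A, tensPow r n f := (Finset.mul_sum _ _ _).symm
        _ ≤ Real.exp (-(n*D - ce*sn)) * 1 := by
            apply mul_le_mul_of_nonneg_left _ (Real.exp_nonneg _)
            calc ∑ f ∈ A, tensPow r n f ≤ ∑ f : Fin n → Fin d, tensPow r n f :=
                Finset.sum_le_sum_of_subset_of_nonneg (Finset.subset_univ A)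
                  (fun f _ _ => tensPow_nonneg hr0 n f)
              _ = 1 := hsum1
        _ = Real.exp (-(n*D - ce*sn)) := mul_one _
    have hmem : (∑ f, Q f * tensPow g n f) ∈ S :=
      ⟨Q, hQ01, by rw [hQr]; exact hArsum, rfl⟩
    calc bEps ε (tensPow r n) (tensPow g n) ≤ ∑ f, Q f * tensPow g n f := csInf_le hSbdd hmem
      _ = ∑ f ∈ A, tensPow g n f := hQg
      _ ≤ Real.exp (-(n*D - ce*sn)) := hgA
  -- converse
  have hconv : ((1-ε)/2) * Real.exp (-(n*D + cc*sn)) ≤ bEps ε (tensPow r n) (tensPow g n) := by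
    apply le_csInf hSne
    rintro y ⟨Q, hQ, hQr, rfl⟩
    set C : Finset (Fin n → Fin d) :=
      Finset.univ.filter (fun f => SnX X n f ≤ n*D + cc*sn ∧ 0 < tensPow r n f) with hCdef
    have hQrC : (1-ε)/2 ≤ ∑ f ∈ C, Q f * tensPow r n f := by
      have htot := Finset.sum_filter_add_sum_filter_not Finset.univ
        (fun f : Fin n → Fin d => SnX X n f ≤ n*D + cc*sn) (fun f => Q f * tensPow r n f)
      have hb1 : ∑ f ∈ Finset.univ.filter
          (fun f : Fin n → Fin d => ¬ SnX X n f ≤ n*D + cc*sn), Q f * tensPow r n f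
          ≤ (1-ε)/2 := by
        have hnotP : Finset.univ.filter (fun f : Fin n → Fin d => ¬ SnX X n f ≤ n*D + cc*sn)
            = Finset.univ.filter (fun f : Fin n → Fin d => n*D + cc*sn < SnX X n f) := by
          apply Finset.filter_congr
          intro f _
          simp [not_le]
        rw [hnotP]
        calc ∑ f ∈ Finset.univ.filter
              (fun f : Fin n → Fin d => n*D + cc*sn < SnX X n f), Q f * tensPow r n f
            ≤ ∑ f ∈ Finset.univ.filter
              (fun f : Fin n → Fin d => n*D + cc*sn < SnX X n f), tensPow r n f :=
              Finset.sum_le_sum (fun f _ =>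
                mul_le_of_le_one_left (tensPow_nonneg hr0 n f) (hQ f).2)
          _ ≤ (1-ε)/2 := chebHigh
      have heq2 : ∑ f ∈ Finset.univ.filter
          (fun f : Fin n → Fin d => SnX X n f ≤ n*D + cc*sn), Q f * tensPow r n f
          = ∑ f ∈ C, Q f * tensPow r n f := by
        rw [← Finset.sum_filter_add_sum_filter_not
          (Finset.univ.filter (fun f : Fin n → Fin d => SnX X n f ≤ n*D + cc*sn))
          (fun f => 0 < tensPow r n f)]
        have hz : ∑ f ∈ (Finset.univ.filter
            (fun f : Fin n → Fin d => SnX X n f ≤ n*D + cc*sn)).filter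
            (fun f => ¬ 0 < tensPow r n f), Q f * tensPow r n f = 0 := by
          apply Finset.sum_eq_zero
          intro f hf
          have h2 := (Finset.mem_filter.mp hf).2
          have : tensPow r n f = 0 := le_antisymm (not_lt.mp h2) (tensPow_nonneg hr0 n f)
          rw [this, mul_zero]
        rw [hz, add_zero, Finset.filter_filter]
      rw [heq2] at htot
      linarith
    have hstep : ∀ f ∈ C, Real.exp (-(n*D + cc*sn)) * (Q f * tensPow r n f)
        ≤ Q f * tensPow g n f := by
      intro f hf
      obtain ⟨-, hP, hpos⟩ := Finset.mem_filter.mp hf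
      rw [tensPow_g_eq hr0 hgpos n f hpos]
      have h1 : Real.exp (-(n*D + cc*sn)) ≤ Real.exp (-(SnX X n f)) :=
        Real.exp_le_exp.mpr (by linarith)
      have hq0 := (hQ f).1
      have hp0 := le_of_lt hpos
      exact (mul_le_mul_of_nonneg_right h1 (mul_nonneg hq0 hp0)).trans_eq (by ring)
    calc ((1-ε)/2) * Real.exp (-(n*D + cc*sn))
        ≤ Real.exp (-(n*D + cc*sn)) * ∑ f ∈ C, Q f * tensPow r n f := by
          rw [mul_comm]
          exact mul_le_mul_of_nonneg_left hQrC (Real.exp_nonneg _)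
      _ = ∑ f ∈ C, Real.exp (-(n*D + cc*sn)) * (Q f * tensPow r n f) := Finset.mul_sum _ _ _
      _ ≤ ∑ f ∈ C, Q f * tensPow g n f := Finset.sum_le_sum hstep
      _ ≤ ∑ f, Q f * tensPow g n f :=
          Finset.sum_le_sum_of_subset_of_nonneg (Finset.subset_univ C)
            (fun f _ _ => mul_nonneg (hQ f).1 (tensPow_nonneg hg0 n f))
  -- conclude
  have hBpos : 0 < bEps ε (tensPow r n) (tensPow g n) :=
    lt_of_lt_of_le (by positivity) hconv
  have hlog1 : Real.log (bEps ε (tensPow r n) (tensPow g n)) ≤ -(n*D - ce*sn) := by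
    have := Real.log_le_log hBpos hach
    rwa [Real.log_exp] at this
  have hlog2 : Real.log ((1-ε)/2) + (-(n*D + cc*sn))
      ≤ Real.log (bEps ε (tensPow r n) (tensPow g n)) := by
    have := Real.log_le_log (by positivity) hconv
    rwa [Real.log_mul (by positivity) (Real.exp_ne_zero _), Real.log_exp] at this
  have hKeq : Real.log ((1-ε)/2) = -K := by
    rw [hKdef, ← Real.log_inv, inv_div]
  rw [hKeq] at hlog2
  show |(- Real.log (bEps ε (tensPow r n) (tensPow g n))) - n*D| ≤ (ce + cc + K) * sn
  have hexp : (ce + cc + K) * sn = ce*sn + cc*sn + K*sn := by ring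
  rw [abs_le]
  constructor
  · linarith [hlog1, mul_nonneg hcc.le hsn.le, mul_nonneg hK.le hsn.le]
  · linarith [hlog2, mul_nonneg hce.le hsn.le, mul_le_mul_of_nonneg_left hsn1 hK.le]
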